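/- For every integer n ≥ 1500, one has 0.999/√(π·n) < 4^{-n} · C(2n, n) < 1/√(π·n). -/

import Mathlib

open Stirling Real Filter Nat Topology

theorem central_binom_stirling (n : ℕ) (hn : n ≠ 0) :
    ((2*n).choose n : ℝ) / 4 ^ n = stirlingSeq (2*n) / (stirlingSeq n ^ 2 * Real.sqrt n) := by
  have hn0 : 0 < (n:ℝ) := by exact_mod_cast Nat.pos_of_ne_zero hn
  have hfac : ((2*n).choose n * n ! * n ! : ℕ) = (2*n)! := by
    have := Nat.choose_mul_factorial_mul_factorial (show n ≤ 2*n by omega)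
    simpa [show 2*n - n = n by omega] using this
  have hfacR : (((2*n).choose n : ℝ)) * (n ! : ℝ) * (n ! : ℝ) = ((2*n)! : ℝ) := by
    exact_mod_cast congrArg (Nat.cast : ℕ → ℝ) hfac
  unfold stirlingSeq
  have h1 : Real.sqrt (2 * ((2*n : ℕ) : ℝ)) = 2 * Real.sqrt n := by
    push_cast
    rw [show (2 * (2 * (n:ℝ))) = 2^2 * n by ring, Real.sqrt_mul (by positivity),
      Real.sqrt_sq (by norm_num)]
  have h2' : (((2*n : ℕ):ℝ) / Real.exp 1) ^ (2*n) = 4 ^ n * ((((n:ℝ))/Real.exp 1) ^ n) ^ 2 := by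
    push_cast
    rw [show (2 * (n:ℝ)) / Real.exp 1 = 2 * ((n:ℝ)/Real.exp 1) by ring, mul_pow,
      show (2:ℝ)^(2*n) = 4^n by rw [pow_mul]; norm_num, ← pow_mul, mul_comm 2 n, pow_mul]
  have h3 : Real.sqrt (2 * (n:ℝ)) ^ 2 = 2 * (n:ℝ) := Real.sq_sqrt (by positivity)
  have hs : Real.sqrt (n:ℝ) * Real.sqrt (n:ℝ) = (n:ℝ) := Real.mul_self_sqrt hn0.le
  have hsn : Real.sqrt (n:ℝ) ≠ 0 := by positivity
  have hs2n : Real.sqrt (2*(n:ℝ)) ≠ 0 := by positivity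
  have hpe : ((n:ℝ)/Real.exp 1) ^ n ≠ 0 := by positivity
  rw [h1, h2']
  field_simp
  ring_nf
  rw [Real.sq_sqrt hn0.le, Real.sq_sqrt (by positivity : (0:ℝ) ≤ (n:ℝ) * 2)]
  rw [Nat.mul_comm 2 n] at hfacR
  linear_combination (2 * (n:ℝ)) * hfacR

theorem sseq_strict (n : ℕ) : stirlingSeq (n+2) < stirlingSeq (n+1) := by
  have h := log_stirlingSeq_diff_hasSum n
  have hpos : 0 < Real.log (stirlingSeq (n+1)) - Real.log (stirlingSeq (n+2)) := by
    refine lt_of_lt_of_le ?_ (le_hasSum h 0 (fun j _ => by positivity))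
    positivity
  have := sub_pos.mp hpos
  exact (Real.log_lt_log_iff (stirlingSeq'_pos (n+1)) (stirlingSeq'_pos n)).mp this

theorem sseq_tendsto' (k : ℕ) :
    Tendsto (fun m : ℕ => stirlingSeq (k + m + 1)) atTop (𝓝 (Real.sqrt Real.pi)) := by
  have h : Tendsto (fun m : ℕ => m + (k + 1)) atTop atTop := tendsto_add_atTop_nat (k+1)
  have := tendsto_stirlingSeq_sqrt_pi.comp h
  refine this.congr (fun m => by simp [Function.comp]; ring_nf)

theorem sqrt_pi_le_sseq (n : ℕ) : Real.sqrt Real.pi ≤ stirlingSeq (n+1) := by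
  have h : Tendsto (fun m : ℕ => stirlingSeq (n + m + 1)) atTop (𝓝 (Real.sqrt Real.pi)) :=
    sseq_tendsto' n
  refine le_of_tendsto h (Eventually.of_forall fun m => ?_)
  have := stirlingSeq'_antitone (show n ≤ n + m by omega)
  simpa [Function.comp, Nat.succ_eq_add_one] using this

theorem log_diff_bound (n : ℕ) (hn : n ≠ 0) (m : ℕ) :
    Real.log (stirlingSeq (n+1)) - Real.log (stirlingSeq (n+m+1)) ≤
      1/4 * (1/(n:ℝ) - 1/((n:ℝ)+m)) := by
  have hn0 : (1:ℝ) ≤ (n:ℝ) := by exact_mod_cast Nat.one_le_iff_ne_zero.mpr hn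
  induction m with
  | zero => simp
  | succ m ih =>
    have step := log_stirlingSeq_sub_log_stirlingSeq_succ (n+m+1)
    have key : (1:ℝ) / (4 * (↑(n+m+1):ℝ)^2) ≤ 1/4 * (1/((n:ℝ)+m) - 1/((n:ℝ)+m+1)) := by
      push_cast
      rw [div_le_iff₀ (by positivity)]
      have h1 : (0:ℝ) < (n:ℝ)+m := by linarith
      have h2 : (0:ℝ) < (n:ℝ)+m+1 := by linarith
      field_simp
      nlinarith [Nat.cast_nonneg (α := ℝ) m]
    have e1 : n + (m+1) + 1 = (n + m) + 2 := by omega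
    rw [e1]
    push_cast
    have := step
    rw [show n + m + 1 = (n+m)+1 from rfl] at this
    push_cast at this ih key ⊢
    ring_nf at this ih key ⊢
    linarith [this, ih, key]

theorem sseq_le_exp (n : ℕ) (hn : n ≠ 0) :
    stirlingSeq (n+1) ≤ Real.sqrt Real.pi * Real.exp (1/(4*(n:ℝ))) := by
  have hn0 : (0:ℝ) < (n:ℝ) := by exact_mod_cast Nat.pos_of_ne_zero hn
  have hπ : (0:ℝ) < Real.sqrt Real.pi := Real.sqrt_pos.mpr Real.pi_pos
  have hlog : Real.log (stirlingSeq (n+1)) ≤ Real.log (Real.sqrt Real.pi) + 1/(4*(n:ℝ)) := by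
    have htd : Tendsto (fun m : ℕ => Real.log (stirlingSeq (n+m+1)) + 1/(4*(n:ℝ))) atTop
        (𝓝 (Real.log (Real.sqrt Real.pi) + 1/(4*(n:ℝ)))) := by
      exact (((Real.continuousAt_log hπ.ne').tendsto.comp (sseq_tendsto' n)).add
        tendsto_const_nhds)
    refine ge_of_tendsto htd (Eventually.of_forall fun m => ?_)
    have h1 := log_diff_bound n hn m
    have h2 : 1/4 * (1/(n:ℝ) - 1/((n:ℝ)+m)) ≤ 1/(4*(n:ℝ)) := by
      have hm : (0:ℝ) < (n:ℝ) + m := by positivity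
      have : (0:ℝ) ≤ 1/((n:ℝ)+m) := by positivity
      rw [one_div (4*(n:ℝ)), mul_comm]
      rw [show (4*(n:ℝ))⁻¹ = (1/(n:ℝ)) * (1/4) by field_simp]
      nlinarith
    linarith
  calc stirlingSeq (n+1) = Real.exp (Real.log (stirlingSeq (n+1))) :=
        (Real.exp_log (stirlingSeq'_pos n)).symm
    _ ≤ Real.exp (Real.log (Real.sqrt Real.pi) + 1/(4*(n:ℝ))) := Real.exp_le_exp.mpr hlog
    _ = Real.sqrt Real.pi * Real.exp (1/(4*(n:ℝ))) := by
        rw [Real.exp_add, Real.exp_log hπ]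

theorem stmt6 (n : ℕ) (hn : 1500 ≤ n) :
    0.999 / Real.sqrt (Real.pi * n) < ((2 * n).choose n : ℝ) / 4 ^ n ∧
    ((2 * n).choose n : ℝ) / 4 ^ n < 1 / Real.sqrt (Real.pi * n) := by
  have hn0 : n ≠ 0 := by omega
  have hnR : (1500:ℝ) ≤ (n:ℝ) := by exact_mod_cast hn
  have hπ : (0:ℝ) < Real.sqrt Real.pi := Real.sqrt_pos.mpr Real.pi_pos
  have hsn : (0:ℝ) < Real.sqrt n := Real.sqrt_pos.mpr (by positivity)
  set A := stirlingSeq (2*n) with hAdef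
  set B := stirlingSeq n with hBdef
  have hA : Real.sqrt Real.pi ≤ A := by
    have := sqrt_pi_le_sseq (2*n-1)
    rwa [show 2*n-1+1 = 2*n by omega] at this
  have hB : Real.sqrt Real.pi ≤ B := by
    have := sqrt_pi_le_sseq (n-1)
    rwa [show n-1+1 = n by omega] at this
  have hBpos : (0:ℝ) < B := lt_of_lt_of_le hπ hB
  have hApos : (0:ℝ) < A := lt_of_lt_of_le hπ hA
  have hAB : A < B := by
    have h1 : stirlingSeq (n+1) < B := by
      have := sseq_strict (n-1)
      rwa [show n-1+2 = n+1 by omega, show n-1+1 = n by omega] at this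
    have h2 : A ≤ stirlingSeq (n+1) := by
      have := stirlingSeq'_antitone (show n ≤ 2*n-1 by omega)
      simp only [Function.comp, Nat.succ_eq_add_one] at this
      rwa [show 2*n-1+1 = 2*n by omega] at this
    linarith
  -- upper bound on B
  have hBle : B ≤ Real.sqrt Real.pi * Real.exp (1/5996 : ℝ) := by
    have h1 := sseq_le_exp (n-1) (by omega)
    rw [show n-1+1 = n by omega] at h1
    have hc : ((n-1 : ℕ):ℝ) = (n:ℝ) - 1 := by
      rw [Nat.cast_sub (by omega)]; norm_num
    rw [hc] at h1
    refine h1.trans ?_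
    have : Real.exp (1/(4*((n:ℝ)-1))) ≤ Real.exp (1/5996 : ℝ) := by
      apply Real.exp_le_exp.mpr
      rw [div_le_div_iff₀ (by linarith) (by norm_num)]
      linarith
    nlinarith
  have hexp : Real.exp (1/2998 : ℝ) < 2998/2997 := by
    have h := Real.add_one_lt_exp (show (-(1/2998) : ℝ) ≠ 0 by norm_num)
    have hpos : (0:ℝ) < Real.exp (-(1/2998)) := Real.exp_pos _
    have : Real.exp ((1/2998 : ℝ)) = (Real.exp (-(1/2998)))⁻¹ := by
      rw [← Real.exp_neg]; norm_num
    rw [this]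
    rw [inv_lt_iff_one_lt_mul₀ hpos]
    nlinarith
  have hB2 : B^2 ≤ Real.pi * Real.exp (1/2998 : ℝ) := by
    have h1 : B^2 ≤ (Real.sqrt Real.pi * Real.exp (1/5996 : ℝ))^2 := by
      have := Real.exp_pos (1/5996 : ℝ)
      nlinarith
    have h2 : (Real.sqrt Real.pi * Real.exp (1/5996 : ℝ))^2
        = Real.pi * Real.exp (1/2998 : ℝ) := by
      rw [mul_pow, Real.sq_sqrt Real.pi_pos.le, sq, ← Real.exp_add]
      norm_num
    linarith
  -- key inequalities
  have hupper : A * Real.sqrt Real.pi < B^2 := by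
    calc A * Real.sqrt Real.pi < B * Real.sqrt Real.pi := by
          exact mul_lt_mul_of_pos_right hAB hπ
      _ ≤ B * B := by exact mul_le_mul_of_nonneg_left hB hBpos.le
      _ = B^2 := (sq B).symm
  have hlower : (0.999 : ℝ) * B^2 < A * Real.sqrt Real.pi := by
    have h1 : (0.999 : ℝ) * B^2 ≤ 0.999 * (Real.pi * Real.exp (1/2998 : ℝ)) := by
      nlinarith
    have h2 : (0.999 : ℝ) * (Real.pi * Real.exp (1/2998 : ℝ)) < Real.pi := by
      nlinarith [Real.pi_pos, hexp, Real.exp_pos (1/2998 : ℝ)]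
    have h3 : Real.pi ≤ A * Real.sqrt Real.pi := by
      have : Real.sqrt Real.pi * Real.sqrt Real.pi = Real.pi :=
        Real.mul_self_sqrt Real.pi_pos.le
      nlinarith
    linarith
  -- assemble
  have hid := central_binom_stirling n hn0
  have hsplit : Real.sqrt (Real.pi * n) = Real.sqrt Real.pi * Real.sqrt n :=
    Real.sqrt_mul Real.pi_pos.le _
  rw [hid, hsplit]
  constructor
  · rw [div_lt_div_iff₀ (by positivity) (by positivity)]
    nlinarith
  · rw [div_lt_div_iff₀ (by positivity) (by positivity)]
    nlinarith
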